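/- Suppose c ≠ 0 and let n₀ be the smallest index n with c_n ≠ 0. Define v(t) = Σ_{n≥1} exp(−λ_n t + ∫_0^t α(r(s)) ds) c_n e_n for t ≥ 0. Then lim_{t→∞} (1/t) log ‖v(t)‖ = −(λ_{n₀} − Σ_{j=1}^N π_j α_j). In particular, ‖v(t)‖ converges exponentially to zero if and only if λ_{n₀} − Σ_{j=1}^N π_j α_j > 0. -/

import Mathlib

open Filter
open scoped BigOperators


lemma norm_tsum_hilbert {H : Type*} [NormedAddCommGroup H] [InnerProductSpace ℝ H]
    [CompleteSpace H] (b : HilbertBasis ℕ ℝ H) (f : ℕ → ℝ)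
    (hf : Summable (fun n => f n ^ 2)) :
    ‖∑' n : ℕ, f n • (b n : H)‖ ^ 2 = ∑' n, f n ^ 2 := by
  have hmem : Memℓp f 2 := by
    apply memℓp_gen
    convert hf using 2 with n
    simp [Real.norm_eq_abs, sq_abs]
  set F : lp (fun _ : ℕ => ℝ) 2 := ⟨f, hmem⟩ with hF
  have hcoe : ∀ n, (F : ∀ _ : ℕ, ℝ) n = f n := fun n => rfl
  have hs : HasSum (fun n : ℕ => f n • (b n : H)) (b.repr.symm F) := by
    have := b.hasSum_repr_symm F
    simpa [hcoe] using this
  rw [hs.tsum_eq]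
  have hnorm : ‖b.repr.symm F‖ = ‖F‖ := by simp
  rw [hnorm]
  have h2 : (0:ℝ) < (2 : ENNReal).toReal := by norm_num
  have hN := lp.norm_rpow_eq_tsum (p := 2) h2 F
  have h2' : (2 : ENNReal).toReal = (2:ℝ) := by norm_num
  rw [h2'] at hN
  calc ‖F‖ ^ 2 = ‖F‖ ^ (2:ℝ) := by rw [← Real.rpow_natCast ‖F‖ 2]; norm_num
    _ = ∑' n, ‖(F : ∀ _ : ℕ, ℝ) n‖ ^ (2:ℝ) := hN
    _ = ∑' n, f n ^ 2 := by
        congr 1 with n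
        rw [hcoe, Real.norm_eq_abs, Real.rpow_two, sq_abs]

lemma switch_int {N : ℕ} (r : ℝ → Fin N) (hr : Measurable r) (α : Fin N → ℝ) (t : ℝ) :
    ∫ s in (0:ℝ)..t, α (r s) = ∑ i, α i * ∫ s in (0:ℝ)..t, (if r s = i then (1:ℝ) else 0) := by
  have hint : ∀ i : Fin N, IntervalIntegrable
      (fun s => if r s = i then (1:ℝ) else 0) MeasureTheory.volume 0 t := by
    intro i
    rw [intervalIntegrable_iff]
    apply MeasureTheory.Integrable.mono' (g := fun _ => (1:ℝ))
    · exact (MeasureTheory.integrableOn_const_iff).mpr (Or.inr measure_Ioc_lt_top)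
    · exact ((Measurable.ite (hr (MeasurableSet.singleton i)) measurable_const
        measurable_const)).aestronglyMeasurable
    · filter_upwards with s; split <;> simp
  have hpt : ∀ s : ℝ, α (r s) = ∑ i, α i * (if r s = i then (1:ℝ) else 0) := by
    intro s
    rw [Finset.sum_eq_single (r s)] <;> simp (config := {contextual := true}) [eq_comm]
  calc ∫ s in (0:ℝ)..t, α (r s)
      = ∫ s in (0:ℝ)..t, ∑ i, α i * (if r s = i then (1:ℝ) else 0) := by
        simp_rw [hpt]
    _ = ∑ i, ∫ s in (0:ℝ)..t, α i * (if r s = i then (1:ℝ) else 0) :=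
        intervalIntegral.integral_finset_sum (fun i _ => (hint i).const_mul (α i))
    _ = ∑ i, α i * ∫ s in (0:ℝ)..t, (if r s = i then (1:ℝ) else 0) := by
        simp_rw [intervalIntegral.integral_const_mul]

lemma At_limit {N : ℕ} (r : ℝ → Fin N) (hr : Measurable r) (α : Fin N → ℝ)
    (pp : Fin N → ℝ)
    (hocc : ∀ i, Tendsto
      (fun t : ℝ => (1 / t) * ∫ s in (0:ℝ)..t, (if r s = i then (1:ℝ) else 0))
      atTop (nhds (pp i))) :
    Tendsto (fun t : ℝ => (1/t) * ∫ s in (0:ℝ)..t, α (r s)) atTop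
      (nhds (∑ j, pp j * α j)) := by
  have : ∀ t : ℝ, (1/t) * ∫ s in (0:ℝ)..t, α (r s)
      = ∑ i, α i * ((1/t) * ∫ s in (0:ℝ)..t, (if r s = i then (1:ℝ) else 0)) := by
    intro t
    rw [switch_int r hr α t, Finset.mul_sum]
    congr 1 with i
    ring
  simp_rw [this]
  have h2 : ∑ j, pp j * α j = ∑ j, α j * pp j := by simp_rw [mul_comm]
  rw [h2]
  exact tendsto_finset_sum _ (fun i _ => (hocc i).const_mul (α i))

lemma S_summable (lam : ℕ → ℝ) (hlam : Monotone lam) (c : ℕ → ℝ)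
    (hc : Summable (fun n => c n ^ 2)) {t : ℝ} (ht : 0 ≤ t) :
    Summable (fun n => Real.exp (-2 * lam n * t) * c n ^ 2) := by
  apply Summable.of_nonneg_of_le
    (fun n => by positivity)
    (fun n => ?_) (hc.mul_left (Real.exp (-2 * lam 0 * t)))
  have : Real.exp (-2 * lam n * t) ≤ Real.exp (-2 * lam 0 * t) := by
    apply Real.exp_le_exp.mpr
    nlinarith [hlam (Nat.zero_le n)]
  nlinarith [sq_nonneg (c n), Real.exp_pos (-2 * lam n * t)]

lemma S_pos (lam : ℕ → ℝ) (hlam : Monotone lam) (c : ℕ → ℝ)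
    (hc : Summable (fun n => c n ^ 2)) (n₀ : ℕ) (hn₀ : c n₀ ≠ 0) {t : ℝ} (ht : 0 ≤ t) :
    0 < ∑' n, Real.exp (-2 * lam n * t) * c n ^ 2 :=
  Summable.tsum_pos (S_summable lam hlam c hc ht) (fun n => by positivity) n₀
    (by positivity)

lemma S_limit (lam : ℕ → ℝ) (hlam : Monotone lam) (c : ℕ → ℝ)
    (hc : Summable (fun n => c n ^ 2)) (n₀ : ℕ) (hn₀ : c n₀ ≠ 0)
    (hn₀min : ∀ m, m < n₀ → c m = 0) :
    Tendsto (fun t : ℝ => (1/t) * ((1/2) *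
        Real.log (∑' n, Real.exp (-2 * lam n * t) * c n ^ 2))) atTop
      (nhds (-lam n₀)) := by
  set S : ℝ → ℝ := fun t => ∑' n, Real.exp (-2 * lam n * t) * c n ^ 2 with hS
  set K : ℝ := ∑' n, Real.exp (-2 * lam n) * c n ^ 2 with hK
  have hKsum : Summable (fun n => Real.exp (-2 * lam n) * c n ^ 2) := by
    simpa using S_summable lam hlam c hc (t := 1) zero_le_one
  have hKpos : 0 < K := by
    have := S_pos lam hlam c hc n₀ hn₀ (t := 1) zero_le_one
    simpa [hK] using this
  set D : ℝ := Real.log (c n₀ ^ 2) with hD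
  have hlow : ∀ t : ℝ, 1 ≤ t →
      -lam n₀ + D / (2*t) ≤ (1/t) * ((1/2) * Real.log (S t)) := by
    intro t ht
    have ht0 : (0:ℝ) < t := lt_of_lt_of_le one_pos ht
    have hLb : -2*lam n₀*t + D ≤ Real.log (S t) := by
      have h1 : Real.exp (-2 * lam n₀ * t) * c n₀ ^ 2 ≤ S t :=
        Summable.le_tsum (S_summable lam hlam c hc ht0.le) n₀ (fun m _ => by positivity)
      have h2 : Real.log (Real.exp (-2 * lam n₀ * t) * c n₀ ^ 2) ≤ Real.log (S t) :=
        Real.log_le_log (by positivity) h1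
      rwa [Real.log_mul (Real.exp_ne_zero _) (by positivity), Real.log_exp] at h2
    have hrw : (1/t) * ((1/2) * Real.log (S t)) = Real.log (S t) / (2*t) := by ring
    rw [hrw, le_div_iff₀ (by linarith)]
    have : (-lam n₀ + D / (2*t)) * (2*t) = -2*lam n₀*t + D := by
      field_simp
    rw [this]; exact hLb
  have hup : ∀ t : ℝ, 1 ≤ t →
      (1/t) * ((1/2) * Real.log (S t)) ≤ -lam n₀ + (2*lam n₀ + Real.log K) / (2*t) := by
    intro t ht
    have ht0 : (0:ℝ) < t := lt_of_lt_of_le one_pos ht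
    have hterm : ∀ n, Real.exp (-2 * lam n * t) * c n ^ 2
        ≤ Real.exp (-2 * lam n₀ * (t-1)) * (Real.exp (-2 * lam n) * c n ^ 2) := by
      intro n
      rcases lt_or_ge n n₀ with h | h
      · simp [hn₀min n h]
      · have hle : lam n₀ ≤ lam n := hlam h
        have h1 : Real.exp (-2 * lam n * t)
            = Real.exp (-2 * lam n * (t-1)) * Real.exp (-2 * lam n) := by
          rw [← Real.exp_add]; ring_nf
        have h2 : Real.exp (-2 * lam n * (t-1)) ≤ Real.exp (-2 * lam n₀ * (t-1)) := by
          apply Real.exp_le_exp.mpr; nlinarith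
        rw [h1, mul_assoc]
        exact mul_le_mul_of_nonneg_right h2 (by positivity)
    have hSK : S t ≤ Real.exp (-2 * lam n₀ * (t-1)) * K := by
      have := Summable.tsum_le_tsum hterm (S_summable lam hlam c hc ht0.le)
        (hKsum.mul_left _)
      rwa [tsum_mul_left] at this
    have hLb : Real.log (S t) ≤ -2*lam n₀*(t-1) + Real.log K := by
      have h2 := Real.log_le_log (S_pos lam hlam c hc n₀ hn₀ ht0.le) hSK
      rwa [Real.log_mul (Real.exp_ne_zero _) hKpos.ne', Real.log_exp] at h2
    have hrw : (1/t) * ((1/2) * Real.log (S t)) = Real.log (S t) / (2*t) := by ring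
    rw [hrw, div_le_iff₀ (by linarith)]
    have : (-lam n₀ + (2*lam n₀ + Real.log K) / (2*t)) * (2*t)
        = -2*lam n₀*(t-1) + Real.log K := by field_simp; ring
    rw [this]; exact hLb
  have hd1 : Tendsto (fun t : ℝ => -lam n₀ + D / (2*t)) atTop (nhds (-lam n₀)) := by
    have : Tendsto (fun t : ℝ => D / (2*t)) atTop (nhds 0) :=
      Tendsto.div_atTop tendsto_const_nhds (tendsto_id.const_mul_atTop two_pos)
    simpa using tendsto_const_nhds.add this
  have hd2 : Tendsto (fun t : ℝ => -lam n₀ + (2*lam n₀ + Real.log K) / (2*t))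
      atTop (nhds (-lam n₀)) := by
    have : Tendsto (fun t : ℝ => (2*lam n₀ + Real.log K) / (2*t)) atTop (nhds 0) :=
      Tendsto.div_atTop tendsto_const_nhds (tendsto_id.const_mul_atTop two_pos)
    simpa using tendsto_const_nhds.add this
  exact tendsto_of_tendsto_of_tendsto_of_le_of_le' hd1 hd2
    (eventually_atTop.2 ⟨1, hlow⟩) (eventually_atTop.2 ⟨1, hup⟩)
/-- sample Lyapunov exponent of
`v(t) = Σ_n exp(−λ_n t + ∫_0^t α(r(s)) ds) c_n e_n`:
`(1/t) log ‖v(t)‖ → −(λ_{n₀} − Σ_j π_j α_j)`, and `‖v(t)‖` converges exponentially to zero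
iff `λ_{n₀} − Σ_j π_j α_j > 0`. -/
theorem sample_lyapunov_exponent_deterministic_part
    {H : Type*} [NormedAddCommGroup H] [InnerProductSpace ℝ H] [CompleteSpace H]
    (b : HilbertBasis ℕ ℝ H)
    (lam : ℕ → ℝ) (hlam : Monotone lam)
    (c : ℕ → ℝ) (hc : Summable (fun n => c n ^ 2)) (hc0 : c ≠ 0)
    (n₀ : ℕ) (hn₀ : c n₀ ≠ 0) (hn₀min : ∀ m, m < n₀ → c m = 0)
    {N : ℕ} (r : ℝ → Fin N) (hr : Measurable r)
    (α : Fin N → ℝ)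
    (pp : Fin N → ℝ) (hpp : ∀ i, 0 ≤ pp i) (hppsum : ∑ i, pp i = 1)
    (hocc : ∀ i, Tendsto
      (fun t : ℝ => (1 / t) * ∫ s in (0:ℝ)..t, (if r s = i then (1:ℝ) else 0))
      atTop (nhds (pp i)))
    (v : ℝ → H)
    (hv : ∀ t : ℝ, v t =
      ∑' n : ℕ, (Real.exp (-lam n * t + ∫ s in (0:ℝ)..t, α (r s)) * c n) • (b n : H)) :
    Tendsto (fun t : ℝ => (1 / t) * Real.log ‖v t‖) atTop
        (nhds (-(lam n₀ - ∑ j, pp j * α j))) ∧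
    ((∃ γ > (0:ℝ), ∃ C : ℝ, ∀ᶠ t in atTop, ‖v t‖ ≤ C * Real.exp (-γ * t)) ↔
      0 < lam n₀ - ∑ j, pp j * α j) := by
  set A : ℝ → ℝ := fun t => ∫ s in (0:ℝ)..t, α (r s) with hA
  set S : ℝ → ℝ := fun t => ∑' n, Real.exp (-2 * lam n * t) * c n ^ 2 with hSdef
  -- squared coefficients
  have hsq : ∀ (t : ℝ) (n : ℕ), (Real.exp (-lam n * t + A t) * c n) ^ 2
      = Real.exp (2 * A t) * (Real.exp (-2 * lam n * t) * c n ^ 2) := by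
    intro t n
    rw [mul_pow, sq (Real.exp _), ← Real.exp_add,
      show (-lam n * t + A t) + (-lam n * t + A t) = 2 * A t + (-2 * lam n * t) by ring,
      Real.exp_add, mul_assoc]
  -- norm and log formulas for t ≥ 0
  have hkey : ∀ t : ℝ, 0 ≤ t → 0 < ‖v t‖ ∧
      Real.log ‖v t‖ = A t + (1/2) * Real.log (S t) := by
    intro t ht
    have hsumm : Summable (fun n => (Real.exp (-lam n * t + A t) * c n) ^ 2) := by
      simp_rw [hsq t]
      exact (S_summable lam hlam c hc ht).mul_left _
    have hnsq : ‖v t‖ ^ 2 = Real.exp (2 * A t) * S t := by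
      rw [hv t]
      rw [norm_tsum_hilbert b _ hsumm]
      simp_rw [hsq t]
      rw [tsum_mul_left]
    have hSpos : 0 < S t := S_pos lam hlam c hc n₀ hn₀ ht
    have hpos2 : 0 < ‖v t‖ ^ 2 := by rw [hnsq]; positivity
    have hpos : 0 < ‖v t‖ := by
      rcases (norm_nonneg (v t)).lt_or_eq with h | h
      · exact h
      · exfalso; rw [← h] at hpos2; simp at hpos2
    refine ⟨hpos, ?_⟩
    have hlog2 : Real.log (‖v t‖ ^ 2) = 2 * Real.log ‖v t‖ := by
      rw [Real.log_pow]; push_cast; ring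
    have : Real.log (‖v t‖ ^ 2) = 2 * A t + Real.log (S t) := by
      rw [hnsq, Real.log_mul (Real.exp_ne_zero _) hSpos.ne', Real.log_exp]
    rw [hlog2] at this
    linarith
  -- the limit
  have hlimit : Tendsto (fun t : ℝ => (1 / t) * Real.log ‖v t‖) atTop
      (nhds (-(lam n₀ - ∑ j, pp j * α j))) := by
    have h1 : Tendsto (fun t : ℝ => (1/t) * A t + (1/t) * ((1/2) * Real.log (S t)))
        atTop (nhds ((∑ j, pp j * α j) + (-lam n₀))) :=
      (At_limit r hr α pp hocc).add (S_limit lam hlam c hc n₀ hn₀ hn₀min)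
    have heq : (fun t : ℝ => (1/t) * A t + (1/t) * ((1/2) * Real.log (S t)))
        =ᶠ[atTop] (fun t : ℝ => (1 / t) * Real.log ‖v t‖) := by
      filter_upwards [eventually_ge_atTop (0:ℝ)] with t ht
      rw [(hkey t ht).2]; ring
    have := h1.congr' heq
    convert this using 2
    ring
  refine ⟨hlimit, ?_, ?_⟩
  · -- exponential decay → positivity
    rintro ⟨γ, hγ, C, hC⟩
    by_contra hle
    push_neg at hle
    -- get C > 0
    obtain ⟨t₁, ht₁, hCt₁⟩ := ((eventually_ge_atTop (1:ℝ)).and hC).exists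
    have hvpos₁ := (hkey t₁ (by linarith)).1
    have hCpos : 0 < C := by
      by_contra hCle
      push_neg at hCle
      have : C * Real.exp (-γ * t₁) ≤ 0 :=
        mul_nonpos_of_nonpos_of_nonneg hCle (Real.exp_nonneg _)
      linarith
    -- comparison function
    have hg : Tendsto (fun t : ℝ => Real.log C / t - γ) atTop (nhds (0 - γ)) :=
      (Tendsto.div_atTop tendsto_const_nhds tendsto_id).sub tendsto_const_nhds
    have hcomp : ∀ᶠ t in atTop,
        (1 / t) * Real.log ‖v t‖ ≤ Real.log C / t - γ := by
      filter_upwards [eventually_ge_atTop (1:ℝ), hC] with t ht hCt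
      have ht0 : (0:ℝ) < t := by linarith
      have hvpos := (hkey t ht0.le).1
      have hlog : Real.log ‖v t‖ ≤ Real.log C + (-γ * t) := by
        have := Real.log_le_log hvpos hCt
        rwa [Real.log_mul hCpos.ne' (Real.exp_ne_zero _), Real.log_exp] at this
      have h1t : 0 < 1 / t := by positivity
      calc (1/t) * Real.log ‖v t‖ ≤ (1/t) * (Real.log C + (-γ * t)) :=
            mul_le_mul_of_nonneg_left hlog h1t.le
        _ = Real.log C / t - γ * (t / t) := by ring
        _ = Real.log C / t - γ := by rw [div_self ht0.ne', mul_one]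
    have := le_of_tendsto_of_tendsto hlimit hg hcomp
    simp only [zero_sub] at this
    linarith
  · -- positivity → exponential decay
    intro hL
    set L := lam n₀ - ∑ j, pp j * α j with hLdef
    refine ⟨L/2, by linarith, 1, ?_⟩
    have hev : ∀ᶠ t in atTop, (1 / t) * Real.log ‖v t‖ < -(L/2) := by
      apply hlimit.eventually_lt_const
      linarith
    filter_upwards [hev, eventually_ge_atTop (1:ℝ)] with t hlt ht
    have ht0 : (0:ℝ) < t := by linarith
    have hvpos := (hkey t ht0.le).1
    have hloglt : Real.log ‖v t‖ < -(L/2) * t := by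
      have := mul_lt_mul_of_pos_right hlt ht0
      rw [one_div, inv_mul_eq_div, div_mul_cancel₀ _ ht0.ne'] at this
      linarith [this]
    calc ‖v t‖ = Real.exp (Real.log ‖v t‖) := (Real.exp_log hvpos).symm
      _ ≤ Real.exp (-(L/2) * t) := Real.exp_le_exp.mpr hloglt.le
      _ = 1 * Real.exp (-(L/2) * t) := (one_mul _).symm
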